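/- (Divergence forcing a common Gaussian parameter) Let P₁ and P₂ be polynomials, neither identically zero, let 0 < α₁ < α₂, and let d be a nonnegative integer. Then ∫_ℝ ∫_ℝ |P₁(λ)| |P₂(t)| e^{-α₁ λ²} e^{-t²/(4α₂)} e^{|λ||t|} / (1+|t|+|λ|)^d dt dλ = ∞. -/

import Mathlib

open MeasureTheory

open Filter
open scoped ENNReal


lemma poly_abs_eventually_ge (P : Polynomial ℂ) (hP : P ≠ 0) :
    ∃ c > (0:ℝ), ∃ M : ℝ, ∀ x : ℝ, M ≤ x → c ≤ ‖P.eval (x : ℂ)‖ := by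
  rcases lt_or_ge 0 P.degree with hdeg | hdeg
  · have hz : Tendsto (fun x : ℝ => ‖(x : ℂ)‖) atTop atTop := by
      simpa [Complex.norm_real] using tendsto_abs_atTop_atTop
    have ht : Tendsto (fun x : ℝ => ‖P.eval ((x:ℝ) : ℂ)‖) atTop atTop :=
      Polynomial.tendsto_norm_atTop P hdeg hz
    obtain ⟨M, hM⟩ := Filter.eventually_atTop.mp (ht.eventually_ge_atTop 1)
    exact ⟨1, one_pos, M, hM⟩
  · have hC := Polynomial.eq_C_of_degree_le_zero hdeg
    have h0 : P.coeff 0 ≠ 0 := by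
      intro h; apply hP; rw [hC, h, map_zero]
    refine ⟨‖P.coeff 0‖, by simpa using h0, 0, fun x _ => ?_⟩
    rw [hC]; simp

/-- **Divergence forcing a common Gaussian parameter** (Step 6 of the main proof).
For nonzero polynomials `P₁, P₂`, `0 < α₁ < α₂` and a nonnegative integer `d`,
`∫∫ |P₁(λ)| |P₂(t)| e^{-α₁λ²} e^{-t²/(4α₂)} e^{|λ||t|}/(1+|t|+|λ|)^d dt dλ = ∞`. -/
theorem divergence_common_gaussian (P₁ P₂ : Polynomial ℂ) (hP₁ : P₁ ≠ 0) (hP₂ : P₂ ≠ 0)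
    (α₁ α₂ : ℝ) (hα₁ : 0 < α₁) (hα : α₁ < α₂) (d : ℕ) :
    (∫⁻ l : ℝ, ∫⁻ t : ℝ,
      ENNReal.ofReal (‖P₁.eval (l : ℂ)‖ * ‖P₂.eval (t : ℂ)‖ *
        Real.exp (-α₁ * l ^ 2) * Real.exp (-t ^ 2 / (4 * α₂)) *
        Real.exp (|l| * |t|) / (1 + |t| + |l|) ^ d)) = ⊤ := by
  obtain ⟨c₁, hc₁, M₁, hM₁⟩ := poly_abs_eventually_ge P₁ hP₁
  obtain ⟨c₂, hc₂, M₂, hM₂⟩ := poly_abs_eventually_ge P₂ hP₂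
  have hα₂ : 0 < α₂ := hα₁.trans hα
  have hε : 0 < α₂ - α₁ := by linarith
  set B : ℝ := 2 * α₂ + 3 with hB
  have hB0 : 0 < B := by positivity
  set K : ℝ := c₁ * c₂ * Real.exp (-(1 / (4 * α₂))) * (α₂ - α₁) ^ (d + 1) /
      ((d + 1).factorial * B ^ d) with hKdef
  have hK : 0 < K := by
    apply div_pos
    · have := Real.exp_pos (-(1 / (4 * α₂)))
      positivity
    · have : (0:ℝ) < (d + 1).factorial := by positivity
      positivity
  set M : ℝ := 1 + max 1 (max M₁ (max (M₂ / (2 * α₂)) (1 / K))) with hMdef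
  -- the constant lower bound function of l
  set h : ℝ → ℝ := fun l => c₁ * c₂ * Real.exp (-α₁ * l ^ 2) *
      Real.exp (α₂ * l ^ 2 - 1 / (4 * α₂)) / (B * l) ^ d with hhdef
  have key : ∀ l : ℝ, M ≤ l → (1:ℝ≥0∞) ≤ ∫⁻ t : ℝ,
      ENNReal.ofReal (‖P₁.eval (l : ℂ)‖ * ‖P₂.eval (t : ℂ)‖ *
        Real.exp (-α₁ * l ^ 2) * Real.exp (-t ^ 2 / (4 * α₂)) *
        Real.exp (|l| * |t|) / (1 + |t| + |l|) ^ d) := by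
    intro l hlM
    have hl1 : 1 ≤ l := by
      have := le_max_left (1:ℝ) (max M₁ (max (M₂ / (2 * α₂)) (1 / K)))
      simp only [hMdef] at hlM; linarith
    have hl0 : 0 < l := lt_of_lt_of_le one_pos hl1
    have hlM₁ : M₁ ≤ l := by
      have h1 := le_max_left M₁ (max (M₂ / (2 * α₂)) (1 / K))
      have h2 := le_max_right (1:ℝ) (max M₁ (max (M₂ / (2 * α₂)) (1 / K)))
      simp only [hMdef] at hlM; linarith
    have hlM₂ : M₂ ≤ 2 * α₂ * l := by
      have h1 := le_max_left (M₂ / (2 * α₂)) (1 / K)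
      have h2 := le_max_right M₁ (max (M₂ / (2 * α₂)) (1 / K))
      have h3 := le_max_right (1:ℝ) (max M₁ (max (M₂ / (2 * α₂)) (1 / K)))
      have h4 : M₂ / (2 * α₂) ≤ l := by simp only [hMdef] at hlM; linarith
      calc M₂ = M₂ / (2 * α₂) * (2 * α₂) := by field_simp
        _ ≤ l * (2 * α₂) := by apply mul_le_mul_of_nonneg_right h4; positivity
        _ = 2 * α₂ * l := by ring
    have hlK : 1 / K ≤ l := by
      have h1 := le_max_right (M₂ / (2 * α₂)) (1 / K)
      have h2 := le_max_right M₁ (max (M₂ / (2 * α₂)) (1 / K))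
      have h3 := le_max_right (1:ℝ) (max M₁ (max (M₂ / (2 * α₂)) (1 / K)))
      simp only [hMdef] at hlM; linarith
    -- Step 1 : 1 ≤ h l
    have hhl : 1 ≤ h l := by
      have hεl : 0 ≤ (α₂ - α₁) * l ^ 2 := by positivity
      have hpow : ((α₂ - α₁) * l ^ 2) ^ (d + 1) / (d + 1).factorial
          ≤ Real.exp ((α₂ - α₁) * l ^ 2) := Real.pow_div_factorial_le_exp ((α₂ - α₁) * l ^ 2) hεl (d + 1)
      have hrw : h l = c₁ * c₂ * Real.exp (-(1 / (4 * α₂))) *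
          Real.exp ((α₂ - α₁) * l ^ 2) / (B * l) ^ d := by
        simp only [hhdef]
        rw [mul_assoc (c₁ * c₂), mul_assoc (c₁ * c₂), ← Real.exp_add, ← Real.exp_add]
        ring_nf
      have expand : K * l ^ (d + 2) = c₁ * c₂ * Real.exp (-(1 / (4 * α₂))) *
          (((α₂ - α₁) * l ^ 2) ^ (d + 1) / (d + 1).factorial) / (B * l) ^ d := by
        have hfac : ((d + 1).factorial : ℝ) ≠ 0 := by positivity
        have hBd : (B : ℝ) ^ d ≠ 0 := by positivity
        have hld : (l : ℝ) ^ d ≠ 0 := by positivity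
        rw [hKdef]
        field_simp [mul_pow]
        rw [mul_pow, mul_pow, ← pow_mul]
        ring
      have h3 : K * l ^ (d + 2) ≤ h l := by
        rw [expand, hrw]
        gcongr
      have h2 : K * l ≤ K * l ^ (d + 2) := by
        have : l = l ^ 1 := (pow_one l).symm
        calc K * l = K * l ^ 1 := by rw [pow_one]
          _ ≤ K * l ^ (d + 2) := by
              apply mul_le_mul_of_nonneg_left _ hK.le
              exact pow_le_pow_right₀ hl1 (by omega)
      have h1 : 1 ≤ K * l := by
        have := (div_le_iff₀ hK).mp hlK
        linarith
      linarith
    -- Step 2 : pointwise bound on the interval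
    set a : ℝ := 2 * α₂ * l with hadef
    have ha0 : 0 < a := by positivity
    have hpt : ∀ t ∈ Set.Icc a (a + 1), h l ≤
        ‖P₁.eval (l : ℂ)‖ * ‖P₂.eval (t : ℂ)‖ *
        Real.exp (-α₁ * l ^ 2) * Real.exp (-t ^ 2 / (4 * α₂)) *
        Real.exp (|l| * |t|) / (1 + |t| + |l|) ^ d := by
      rintro t ⟨ht1, ht2⟩
      have ht0 : 0 < t := lt_of_lt_of_le ha0 ht1
      rw [abs_of_pos hl0, abs_of_pos ht0]
      have hP1l : c₁ ≤ ‖P₁.eval (l : ℂ)‖ := hM₁ l hlM₁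
      have hP2t : c₂ ≤ ‖P₂.eval (t : ℂ)‖ := hM₂ t (le_trans hlM₂ ht1)
      have hexp : Real.exp (α₂ * l ^ 2 - 1 / (4 * α₂)) ≤
          Real.exp (-t ^ 2 / (4 * α₂)) * Real.exp (l * t) := by
        rw [← Real.exp_add, Real.exp_le_exp]
        have hq : -t ^ 2 / (4 * α₂) + l * t - (α₂ * l ^ 2 - 1 / (4 * α₂)) =
            (1 - (t - 2 * α₂ * l) ^ 2) / (4 * α₂) := by
          field_simp
          ring
        have hs : (t - 2 * α₂ * l) ^ 2 ≤ 1 := by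
          simp only [hadef] at ht1 ht2
          nlinarith
        have : 0 ≤ (1 - (t - 2 * α₂ * l) ^ 2) / (4 * α₂) := div_nonneg (by linarith) (by positivity)
        linarith [hq ▸ this]
      have hden : (1 + t + l) ^ d ≤ (B * l) ^ d := by
        apply pow_le_pow_left₀ (by linarith)
        simp only [hadef] at ht2
        simp only [hB]
        nlinarith
      have hnum : c₁ * c₂ * Real.exp (-α₁ * l ^ 2) * Real.exp (α₂ * l ^ 2 - 1 / (4 * α₂)) ≤
          ‖P₁.eval (l : ℂ)‖ * ‖P₂.eval (t : ℂ)‖ *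
          Real.exp (-α₁ * l ^ 2) * Real.exp (-t ^ 2 / (4 * α₂)) * Real.exp (l * t) := by
        calc c₁ * c₂ * Real.exp (-α₁ * l ^ 2) * Real.exp (α₂ * l ^ 2 - 1 / (4 * α₂))
            ≤ ‖P₁.eval (l : ℂ)‖ * ‖P₂.eval (t : ℂ)‖ *
              Real.exp (-α₁ * l ^ 2) * Real.exp (α₂ * l ^ 2 - 1 / (4 * α₂)) := by
              gcongr
          _ ≤ ‖P₁.eval (l : ℂ)‖ * ‖P₂.eval (t : ℂ)‖ *
              Real.exp (-α₁ * l ^ 2) * (Real.exp (-t ^ 2 / (4 * α₂)) * Real.exp (l * t)) := by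
              gcongr
          _ = ‖P₁.eval (l : ℂ)‖ * ‖P₂.eval (t : ℂ)‖ *
              Real.exp (-α₁ * l ^ 2) * Real.exp (-t ^ 2 / (4 * α₂)) * Real.exp (l * t) := by
              ring
      simp only [hhdef]
      apply div_le_div₀ (by positivity) hnum (by positivity) hden
    -- Step 3 : lower bound the inner integral
    calc (1:ℝ≥0∞) ≤ ENNReal.ofReal (h l) := by
          rw [ENNReal.one_le_ofReal]; exact hhl
      _ = ENNReal.ofReal (h l) * volume (Set.Icc a (a + 1)) := by
          rw [Real.volume_Icc]
          norm_num
      _ = ∫⁻ _ in Set.Icc a (a + 1), ENNReal.ofReal (h l) := (setLIntegral_const _ _).symm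
      _ ≤ ∫⁻ t in Set.Icc a (a + 1),
            ENNReal.ofReal (‖P₁.eval (l : ℂ)‖ * ‖P₂.eval (t : ℂ)‖ *
              Real.exp (-α₁ * l ^ 2) * Real.exp (-t ^ 2 / (4 * α₂)) *
              Real.exp (|l| * |t|) / (1 + |t| + |l|) ^ d) :=
          setLIntegral_mono' measurableSet_Icc
            (fun t ht => ENNReal.ofReal_le_ofReal (hpt t ht))
      _ ≤ _ := setLIntegral_le_lintegral _ _
  rw [eq_top_iff]
  calc (⊤:ℝ≥0∞) = 1 * volume (Set.Ici M) := by rw [Real.volume_Ici]; simp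
    _ = ∫⁻ _ in Set.Ici M, 1 := (setLIntegral_const _ _).symm
    _ ≤ ∫⁻ l in Set.Ici M, ∫⁻ t : ℝ,
          ENNReal.ofReal (‖P₁.eval (l : ℂ)‖ * ‖P₂.eval (t : ℂ)‖ *
            Real.exp (-α₁ * l ^ 2) * Real.exp (-t ^ 2 / (4 * α₂)) *
            Real.exp (|l| * |t|) / (1 + |t| + |l|) ^ d) :=
        setLIntegral_mono' measurableSet_Ici (fun l hl => key l hl)
    _ ≤ _ := setLIntegral_le_lintegral _ _
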